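/- For every integer n ≥ 1 and every t with 0 < t ≤ 1, the following integral identity holds: ∫_t^1 (1 - τ²)ⁿ · (τ² - t²)/(2τ) dτ = - ∫_t^1 (ρ² - t²)ⁿ · ((1 - ρ^{-2n})/(2n)) · ρ dρ. -/

import Mathlib

open intervalIntegral Set
set_option maxHeartbeats 1000000 in

/-- The integral identity behind equation (4.13): for every integer `n ≥ 1` and every
`0 < t ≤ 1`,
`∫_t^1 (1 - τ²)ⁿ (τ² - t²)/(2τ) dτ = - ∫_t^1 (ρ² - t²)ⁿ ((1 - ρ^{-2n})/(2n)) ρ dρ`. -/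
theorem statement15 (n : ℕ) (hn : 1 ≤ n) (t : ℝ) (ht0 : 0 < t) (ht1 : t ≤ 1) :
    ∫ τ in t..1, (1 - τ ^ 2) ^ n * ((τ ^ 2 - t ^ 2) / (2 * τ)) =
      -∫ ρ in t..1, (ρ ^ 2 - t ^ 2) ^ n * ((1 - ρ ^ (-(2 * (n : ℤ)))) / (2 * n)) * ρ := by
  have hN : (0:ℝ) < (n:ℝ) := by exact_mod_cast hn
  have hN' : (n:ℝ) ≠ 0 := ne_of_gt hN
  have hN1 : (n:ℝ) + 1 ≠ 0 := by positivity
  have huIcc : Set.uIcc t 1 = Set.Icc t 1 := Set.uIcc_of_le ht1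
  have hpos : ∀ x ∈ Set.uIcc t 1, 0 < x := by
    intro x hx
    rw [huIcc] at hx
    exact lt_of_lt_of_le ht0 hx.1
  -- the explicit antiderivative
  set G : ℝ → ℝ := fun x => (x^2 - t^2)^(n+1) * (1/(4*n*(n+1)))
      + (1 - x^2)^(n+1) * ((t^2/(4*n)) * (x^2)⁻¹ - 1/(4*(n+1))) with hG
  set D : ℝ → ℝ := fun x => (1 - x^2)^n * (x/2 - t^2/(2*x) - t^2/(2*n*x^3))
      + (x^2 - t^2)^n * (x/(2*n)) with hD
  have hderiv : ∀ x ∈ Set.uIcc t 1, HasDerivAt G (D x) x := by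
    intro x hx
    have hx0 : x ≠ 0 := ne_of_gt (hpos x hx)
    have h1 : HasDerivAt (fun y : ℝ => (y^2 - t^2)^(n+1))
        ((n+1 : ℕ) * (x^2 - t^2)^n * (2 * x^1)) x := by
      have := ((hasDerivAt_pow 2 x).sub_const (t^2)).fun_pow (n+1)
      simpa using this
    have h2 : HasDerivAt (fun y : ℝ => (1 - y^2)^(n+1))
        ((n+1 : ℕ) * (1 - x^2)^n * (-(2 * x^1))) x := by
      have := ((hasDerivAt_pow 2 x).const_sub 1).fun_pow (n+1)
      simpa using this
    have h3 : HasDerivAt (fun y : ℝ => (t^2/(4*n)) * (y^2)⁻¹ - 1/(4*(n+1)))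
        ((t^2/(4*n)) * (-(2 * x^1) / (x^2)^2)) x := by
      exact (((hasDerivAt_pow 2 x).inv (pow_ne_zero 2 hx0)).const_mul _).sub_const _
    have h := (h1.mul_const (1/(4*(n:ℝ)*(n+1)))).fun_add (h2.fun_mul h3)
    refine h.congr_deriv ?_
    simp only [hD, pow_succ, pow_one, Nat.cast_add, Nat.cast_one]
    field_simp
    ring
  have hDint : IntervalIntegrable D MeasureTheory.volume t 1 := by
    apply ContinuousOn.intervalIntegrable
    apply ContinuousOn.add
    · apply ContinuousOn.mul (by fun_prop)
      apply ContinuousOn.sub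
      · apply ContinuousOn.sub (by fun_prop)
        exact ContinuousOn.div (by fun_prop) (by fun_prop)
          (fun x hx => by have := hpos x hx; positivity)
      · exact ContinuousOn.div (by fun_prop) (by fun_prop)
          (fun x hx => by have := hpos x hx; positivity)
    · fun_prop
  have hFTC : ∫ x in t..1, D x = G 1 - G t :=
    intervalIntegral.integral_eq_sub_of_hasDerivAt hderiv hDint
  have hG0 : G 1 - G t = 0 := by
    have e1 : ((1:ℝ) - 1^2) = 0 := by norm_num
    simp only [hG, e1, sub_self, zero_pow (Nat.succ_ne_zero n), zero_mul, one_pow,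
      mul_zero, zero_add, add_zero, inv_one, mul_one]
    field_simp
    ring
  -- substitution: ∫ (1-x²)ⁿ t²/(2n x³) = ∫ (1-t²/u²)ⁿ u/(2n)
  set g : ℝ → ℝ := fun u => (1 - t^2/u^2)^n * (u/(2*n)) with hg
  set P : ℝ → ℝ := fun x => (1 - x^2)^n * (t^2/(2*n*x^3)) with hP
  have hfd : ∀ x ∈ Set.uIcc t 1, HasDerivAt (fun y : ℝ => t/y) (t * -((x^2)⁻¹)) x := by
    intro x hx
    have hx0 : x ≠ 0 := ne_of_gt (hpos x hx)
    simpa [div_eq_mul_inv] using (hasDerivAt_inv hx0).const_mul t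
  have himg : ∀ x ∈ Set.uIcc t 1, (0:ℝ) < t / x := by
    intro x hx
    exact div_pos ht0 (hpos x hx)
  have hsub : (∫ x in t..1, (t * -((x^2)⁻¹)) • (g ∘ (fun y => t/y)) x) = ∫ u in (t/t)..(t/1), g u := by
    apply intervalIntegral.integral_comp_smul_deriv' hfd
    · apply ContinuousOn.mul continuousOn_const
      apply ContinuousOn.neg
      exact ContinuousOn.inv₀ (by fun_prop) (fun x hx => by have := hpos x hx; positivity)
    · apply ContinuousOn.mul
      · apply ContinuousOn.pow
        apply ContinuousOn.sub continuousOn_const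
        apply ContinuousOn.div continuousOn_const (by fun_prop)
        rintro u ⟨x, hx, rfl⟩
        have := himg x hx; positivity
      · fun_prop
  have hgcont : ContinuousOn g (Set.uIcc t 1) := by
    apply ContinuousOn.mul
    · apply ContinuousOn.pow
      apply ContinuousOn.sub continuousOn_const
      exact ContinuousOn.div continuousOn_const (by fun_prop)
        (fun x hx => by have := hpos x hx; positivity)
    · fun_prop
  have hPcont : ContinuousOn P (Set.uIcc t 1) := by
    apply ContinuousOn.mul (by fun_prop)
    exact ContinuousOn.div continuousOn_const (by fun_prop)
      (fun x hx => by have := hpos x hx; positivity)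
  have hgint : IntervalIntegrable g MeasureTheory.volume t 1 :=
    hgcont.intervalIntegrable
  have hPint : IntervalIntegrable P MeasureTheory.volume t 1 :=
    hPcont.intervalIntegrable
  have hPg : (∫ x in t..1, P x) = ∫ u in t..1, g u := by
    have h1 : Set.EqOn (fun x => (t * -((x^2)⁻¹)) • (g ∘ (fun y => t/y)) x)
        (fun x => -P x) (Set.uIcc t 1) := by
      intro x hx
      have hx0 : x ≠ 0 := ne_of_gt (hpos x hx)
      simp only [hg, hP, Function.comp, smul_eq_mul]
      have hb : 1 - t^2/(t/x)^2 = 1 - x^2 := by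
        field_simp
      rw [hb]
      field_simp
    rw [intervalIntegral.integral_congr h1, intervalIntegral.integral_neg,
      div_self ht0.ne', div_one, intervalIntegral.integral_symm t 1] at hsub
    linarith
  -- pointwise identities
  set R1 : ℝ → ℝ := fun x => (x^2 - t^2)^n * (x/(2*n)) with hR1
  have hR1int : IntervalIntegrable R1 MeasureTheory.volume t 1 := by
    apply Continuous.intervalIntegrable
    fun_prop
  have hLeq : Set.EqOn (fun τ : ℝ => (1 - τ ^ 2) ^ n * ((τ ^ 2 - t ^ 2) / (2 * τ)))
      (fun x => D x - R1 x + P x) (Set.uIcc t 1) := by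
    intro x hx
    have hx0 : x ≠ 0 := ne_of_gt (hpos x hx)
    simp only [hD, hP, hR1]
    field_simp
    ring
  have hReq : Set.EqOn
      (fun ρ : ℝ => (ρ ^ 2 - t ^ 2) ^ n * ((1 - ρ ^ (-(2 * (n : ℤ)))) / (2 * n)) * ρ)
      (fun x => R1 x - g x) (Set.uIcc t 1) := by
    intro x hx
    have hx0 : x ≠ 0 := ne_of_gt (hpos x hx)
    simp only [hg, hR1]
    have hz : x ^ (-(2 * (n:ℤ))) = (x^(2*n))⁻¹ := by
      rw [zpow_neg]
      norm_cast
    have hb : 1 - t^2/x^2 = (x^2 - t^2) * (x^2)⁻¹ := by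
      field_simp
    rw [hz, hb, mul_pow, inv_pow, ← pow_mul]
    ring
  rw [intervalIntegral.integral_congr hLeq, intervalIntegral.integral_congr hReq,
    intervalIntegral.integral_sub hR1int hgint,
    intervalIntegral.integral_add (hDint.sub hR1int) hPint,
    intervalIntegral.integral_sub hDint hR1int, hFTC, hG0, hPg]
  ring
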